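/- Asymptotic entropy decay rate: assume the core matrix M̃ has N−1 distinct real eigenvalues μ1 > μ2 > … > μ_{N−1} > 0, with right eigenvectors v^{(i)} and left eigenvectors u^{(i)} normalized by ∑_j v^{(1)}_j = 1 and ⟨u^{(i)}, v^{(i)}⟩ = 1, all extended to ℝ^{N+1} (u^{(i)} by zeros at 0 and N, and v^{(1)} by zeros at 0 and N). Let φ be twice continuously differentiable in a neighbourhood of 1 with φ(1) = 0 and φ''(1) = m. Let p ∈ Δ^N with ⟨u^{(1)},p⟩ > 0 and p ∉ span{e_0, v^{(1)}, e_N}, and let j* = min{ j ≥ 2 : ⟨u^{(j)}, p⟩ ≠ 0 }. Then lim_{n→∞} (μ1/μ_{j*})^{2n} E(M^n p) = (m/2) · (⟨u^{(j*)},p⟩² / ⟨u^{(1)},p⟩²) · ∑_{i=1}^{N−1} (v^{(j*)}_i)² u^{(1)}_i / v^{(1)}_i; in particular E(M^n p) decays exponentially at rate 2 log(μ1/μ_{j*}). -/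

import Mathlib

open Finset Matrix Filter
open Topology

/-- The (N+1)×(N+1) Moran transition matrix (indices 0,…,N) built from a
type selection vector `s`. -/
noncomputable def moranM (N : ℕ) (s : ℕ → ℝ) : Matrix (Fin (N + 1)) (Fin (N + 1)) ℝ :=
  fun i j =>
    if (i : ℕ) + 1 = (j : ℕ) then ((j : ℕ) : ℝ) / N * (1 - s (j : ℕ))
    else if (i : ℕ) = (j : ℕ) + 1 then ((N : ℝ) - ((j : ℕ) : ℝ)) / N * s (j : ℕ)
    else if (i : ℕ) = (j : ℕ) then
      1 - ((j : ℕ) : ℝ) / N * (1 - s (j : ℕ)) - ((N : ℝ) - ((j : ℕ) : ℝ)) / N * s (j : ℕ)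
    else 0

/-- `s` is a type selection vector: `s 0 = 0`, `s N = 1`, `0 < s i < 1` in the interior. -/
def IsTypeSelection (N : ℕ) (s : ℕ → ℝ) : Prop :=
  s 0 = 0 ∧ s N = 1 ∧ ∀ i : ℕ, 0 < i → i < N → 0 < s i ∧ s i < 1

/-- The core matrix: the (N−1)×(N−1) submatrix of the Moran matrix on states 1,…,N−1. -/
noncomputable def moranCore (N : ℕ) (s : ℕ → ℝ) : Matrix (Fin (N - 1)) (Fin (N - 1)) ℝ :=
  fun i j =>
    moranM N s ⟨(i : ℕ) + 1, by have := i.isLt; omega⟩ ⟨(j : ℕ) + 1, by have := j.isLt; omega⟩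

/-- Embedding of core indices {1,…,N−1} into the full index set {0,…,N}. -/
def embIn (N : ℕ) (i : Fin (N - 1)) : Fin (N + 1) :=
  ⟨(i : ℕ) + 1, by have := i.isLt; omega⟩

lemma sum_split (N : ℕ) (hN : 2 ≤ N) (f : Fin (N + 1) → ℝ) :
    ∑ j, f j = f ⟨0, by omega⟩ + (∑ i : Fin (N - 1), f (embIn N i)) + f (Fin.last N) := by
  set F : ℕ → ℝ := fun j => if h : j < N + 1 then f ⟨j, h⟩ else 0 with hF
  have h1 : ∑ j, f j = ∑ j ∈ Finset.range (N + 1), F j := by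
    rw [← Fin.sum_univ_eq_sum_range]
    exact Finset.sum_congr rfl fun i _ => by
      simp [hF, i.isLt]
      exact fun h' => absurd h' (by have := i.isLt; omega)
  have h2 : ∑ i : Fin (N - 1), f (embIn N i) = ∑ i ∈ Finset.range (N - 1), F (i + 1) := by
    rw [← Fin.sum_univ_eq_sum_range (fun i => F (i + 1))]
    refine Finset.sum_congr rfl fun i _ => ?_
    have hi := i.isLt
    simp only [hF, embIn]
    rw [dif_pos (by omega)]
  obtain ⟨K, hK⟩ : ∃ K, N = K + 1 := ⟨N - 1, by omega⟩
  rw [h1, h2, Finset.sum_range_succ]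
  have h3 : Finset.range N = Finset.range ((N - 1) + 1) := by congr 1; omega
  rw [h3, Finset.sum_range_succ']
  have hFN : F N = f (Fin.last N) := by simp [hF, Fin.last]
  have hF0 : F 0 = f ⟨0, by omega⟩ := by simp [hF]
  rw [hFN, hF0]
  ring

lemma moranM_col0 (N : ℕ) (s : ℕ → ℝ) (hs0 : s 0 = 0) (i : Fin (N - 1)) :
    moranM N s (embIn N i) ⟨0, by omega⟩ = 0 := by
  have hi := i.isLt
  rcases Nat.eq_zero_or_pos i.1 with h | h
  · simp [moranM, embIn, h, hs0]
  · have h1 : ¬((i : ℕ) + 1 + 1 = 0) := by omega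
    have h2 : ¬((i : ℕ) + 1 = 0 + 1) := by omega
    have h3 : ¬((i : ℕ) + 1 = 0) := by omega
    simp [moranM, embIn, h1, h2, h3]
    exact fun h4 => absurd h4 (by omega)

lemma moranM_colN (N : ℕ) (hN : 2 ≤ N) (s : ℕ → ℝ) (hsN : s N = 1) (i : Fin (N - 1)) :
    moranM N s (embIn N i) (Fin.last N) = 0 := by
  have hi := i.isLt
  by_cases h : (i : ℕ) = N - 2
  · have h1 : (i : ℕ) + 1 + 1 = N := by omega
    simp [moranM, embIn, Fin.last, h1, hsN]
  · have h1 : ¬((i : ℕ) + 1 + 1 = N) := by omega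
    have h2 : ¬((i : ℕ) + 1 = N + 1) := by omega
    have h3 : ¬((i : ℕ) + 1 = N) := by omega
    simp [moranM, embIn, Fin.last, h1, h2, h3]

lemma core_step (N : ℕ) (hN : 2 ≤ N) (s : ℕ → ℝ) (hs0 : s 0 = 0) (hsN : s N = 1)
    (q : Fin (N + 1) → ℝ) (i : Fin (N - 1)) :
    (moranM N s).mulVec q (embIn N i)
      = (moranCore N s).mulVec (fun j => q (embIn N j)) i := by
  have h1 : (moranM N s).mulVec q (embIn N i)
      = ∑ j, moranM N s (embIn N i) j * q j := rfl
  rw [h1, sum_split N hN, moranM_col0 N s hs0 i, moranM_colN N hN s hsN i]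
  simp only [zero_mul, add_zero, zero_add]
  rfl

lemma core_pow (N : ℕ) (hN : 2 ≤ N) (s : ℕ → ℝ) (hs0 : s 0 = 0) (hsN : s N = 1)
    (p : Fin (N + 1) → ℝ) (n : ℕ) (i : Fin (N - 1)) :
    (moranM N s ^ n).mulVec p (embIn N i)
      = (moranCore N s ^ n).mulVec (fun j => p (embIn N j)) i := by
  induction n generalizing p with
  | zero => simp [Matrix.one_mulVec]
  | succ n ih =>
    rw [pow_succ, pow_succ, ← Matrix.mulVec_mulVec, ← Matrix.mulVec_mulVec]
    have := ih ((moranM N s).mulVec p)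
    rw [this]
    congr 1
    ext j
    exact core_step N hN s hs0 hsN p j

noncomputable def gAux (φ : ℝ → ℝ) (m : ℝ) : ℝ → ℝ :=
  fun ε => if ε = 0 then m / 2 else (φ (1 + ε) - φ 1 - deriv φ 1 * ε) / ε ^ 2

lemma gAux_id (φ : ℝ → ℝ) (m : ℝ) (ε : ℝ) :
    φ (1 + ε) = gAux φ m ε * ε ^ 2 + φ 1 + deriv φ 1 * ε := by
  by_cases h : ε = 0
  · simp [gAux, h]
  · rw [gAux, if_neg h, div_mul_cancel₀ _ (pow_ne_zero 2 h)]
    ring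

theorem taylor2 (φ : ℝ → ℝ) (hφ : ContDiffAt ℝ 2 φ 1) :
    Tendsto (fun ε => (φ (1 + ε) - φ 1 - deriv φ 1 * ε) / ε ^ 2) (𝓝[≠] (0:ℝ))
      (𝓝 (iteratedDeriv 2 φ 1 / 2)) := by
  obtain ⟨u, hu, hcd⟩ := hφ.contDiffOn le_rfl (by simp)
  obtain ⟨t, htu, ht, h1t⟩ := mem_nhds_iff.mp hu
  have hcd2 : ContDiffOn ℝ 2 φ t := hcd.mono htu
  rw [show (2 : WithTop ℕ∞) = 1 + 1 by rfl, contDiffOn_succ_iff_deriv_of_isOpen ht] at hcd2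
  have hdφ : DifferentiableOn ℝ φ t := hcd2.1
  have hdd : DifferentiableAt ℝ (deriv φ) 1 :=
    (hcd2.2.2.differentiableOn one_ne_zero).differentiableAt (ht.mem_nhds h1t)
  have hm : HasDerivAt (deriv φ) (iteratedDeriv 2 φ 1) 1 := by
    rw [iteratedDeriv_succ, iteratedDeriv_one]
    exact hdd.hasDerivAt
  -- the map ε ↦ 1 + ε sends 𝓝[≠] 0 to 𝓝[≠] 1
  have hmap : Tendsto (fun ε : ℝ => 1 + ε) (𝓝[≠] (0:ℝ)) (𝓝[≠] (1:ℝ)) := by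
    rw [tendsto_nhdsWithin_iff]
    constructor
    · have : Tendsto (fun ε : ℝ => 1 + ε) (𝓝 0) (𝓝 (1 + 0)) :=
        (continuous_const.add continuous_id).tendsto 0
      simpa using this.mono_left nhdsWithin_le_nhds
    · filter_upwards [self_mem_nhdsWithin] with ε hε
      simpa using hε
  have hslope : Tendsto (fun ε : ℝ => (deriv φ (1 + ε) - deriv φ 1) / ε) (𝓝[≠] (0:ℝ))
      (𝓝 (iteratedDeriv 2 φ 1)) := by
    have := (hasDerivAt_iff_tendsto_slope.mp hm).comp hmap
    refine this.congr fun ε => ?_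
    simp [slope, Function.comp, inv_mul_eq_div]
  have hevd : ∀ᶠ ε in 𝓝 (0:ℝ), (1 + ε) ∈ t := by
    have hcont : Tendsto (fun ε : ℝ => 1 + ε) (𝓝 0) (𝓝 (1 + 0)) :=
      (continuous_const.add continuous_id).tendsto 0
    rw [add_zero] at hcont
    exact hcont (ht.mem_nhds h1t)
  apply HasDerivAt.lhopital_zero_nhdsNE
    (f' := fun ε => deriv φ (1 + ε) - deriv φ 1) (g' := fun ε => 2 * ε)
  · filter_upwards [eventually_nhdsWithin_of_eventually_nhds hevd] with ε hε
    have h1 : HasDerivAt (fun x : ℝ => φ (1 + x)) (deriv φ (1 + ε) * 1) ε := by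
      have hd : HasDerivAt φ (deriv φ (1 + ε)) (1 + ε) :=
        ((hdφ.differentiableAt (ht.mem_nhds hε))).hasDerivAt
      exact hd.comp ε ((hasDerivAt_id ε).const_add 1)
    have h2 : HasDerivAt (fun x : ℝ => deriv φ 1 * x) (deriv φ 1) ε := by
      simpa using (hasDerivAt_id ε).const_mul (deriv φ 1)
    have h3 := (h1.sub_const (φ 1)).sub h2
    rw [mul_one] at h3
    exact h3
  · filter_upwards with ε
    simpa using hasDerivAt_pow 2 ε
  · filter_upwards [self_mem_nhdsWithin] with ε hε
    have : ε ≠ 0 := hε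
    positivity
  · have hc : ContinuousAt (fun ε : ℝ => φ (1 + ε) - φ 1 - deriv φ 1 * ε) 0 := by
      have h0 : ContinuousAt φ ((fun ε : ℝ => 1 + ε) 0) := by
        have : ContinuousAt φ 1 := (hdφ.differentiableAt (ht.mem_nhds h1t)).continuousAt
        simpa using this
      have h1 : ContinuousAt (fun ε : ℝ => φ (1 + ε)) 0 :=
        h0.comp ((continuous_const.add continuous_id).continuousAt)
      exact (h1.sub continuousAt_const).sub (continuousAt_const.mul continuousAt_id)
    have h2 : Tendsto (fun ε : ℝ => φ (1 + ε) - φ 1 - deriv φ 1 * ε) (𝓝[≠] (0:ℝ))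
        (𝓝 (φ (1 + 0) - φ 1 - deriv φ 1 * 0)) :=
      hc.tendsto.mono_left nhdsWithin_le_nhds
    simpa using h2
  · have : Tendsto (fun ε : ℝ => ε ^ 2) (𝓝 0) (𝓝 0) := by
      simpa using (continuous_pow 2).tendsto (0:ℝ)
    exact this.mono_left nhdsWithin_le_nhds
  · have := hslope.div_const 2
    refine this.congr fun ε => ?_
    rw [div_div, mul_comm]

lemma gAux_continuousAt (φ : ℝ → ℝ) (hφ : ContDiffAt ℝ 2 φ 1) (m : ℝ)
    (hm : iteratedDeriv 2 φ 1 = m) : ContinuousAt (gAux φ m) 0 := by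
  rw [← continuousWithinAt_compl_self]
  have h := taylor2 φ hφ
  rw [hm] at h
  have h2 : Tendsto (gAux φ m) (𝓝[≠] (0:ℝ)) (𝓝 (m / 2)) := by
    refine h.congr' ?_
    filter_upwards [self_mem_nhdsWithin] with ε hε
    have : ε ≠ 0 := hε
    simp [gAux, this]
  have h3 : gAux φ m 0 = m / 2 := if_pos rfl
  unfold ContinuousWithinAt
  rw [h3]
  exact h2
/-- asymptotic entropy decay rate: if the core matrix has N−1
distinct positive eigenvalues μ_{i0} = μ₁ > μ₂ > … > 0, and j* is the least
index > i0 with ⟨u^{(j*)},p⟩ ≠ 0, then (μ₁/μ_{j*})^{2n} E(Mⁿp) converges to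
(m/2)·(⟨u^{(j*)},p⟩²/⟨u^{(1)},p⟩²)·∑ᵢ (v^{(j*)}ᵢ)² u^{(1)}ᵢ/v^{(1)}ᵢ. -/
theorem moran_entropy_asymptotic_decay
    (N : ℕ) (hN : 2 ≤ N) (s : ℕ → ℝ) (hs : IsTypeSelection N s)
    (μ : Fin (N - 1) → ℝ) (hμanti : StrictAnti μ) (hμpos : ∀ i, 0 < μ i)
    (V U : Fin (N - 1) → (Fin (N - 1) → ℝ))
    (hMV : ∀ i, (moranCore N s).mulVec (V i) = μ i • V i)
    (hUM : ∀ i, (moranCore N s).vecMul (U i) = μ i • U i)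
    (i0 : Fin (N - 1)) (hi0 : (i0 : ℕ) = 0)
    (hV1sum : ∑ j, V i0 j = 1) (hUV : ∀ i, ∑ j, U i j * V i j = 1)
    (hVpos : ∀ j, 0 < V i0 j) (hUpos : ∀ j, 0 < U i0 j)
    (vext : Fin (N + 1) → ℝ)
    (hvx0 : vext ⟨0, by omega⟩ = 0) (hvxN : vext (Fin.last N) = 0)
    (hvxi : ∀ i : Fin (N - 1), vext (embIn N i) = V i0 i)
    (φ : ℝ → ℝ) (hφC2 : ContDiffAt ℝ 2 φ 1) (hφ1 : φ 1 = 0)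
    (m : ℝ) (hm : iteratedDeriv 2 φ 1 = m)
    (p : Fin (N + 1) → ℝ) (hp : ∀ i, 0 ≤ p i) (hpsum : ∑ i, p i = 1)
    (hip : 0 < ∑ i : Fin (N - 1), U i0 i * p (embIn N i))
    (hspan : p ∉ Submodule.span ℝ
      ({(Pi.single (⟨0, by omega⟩ : Fin (N + 1)) 1 : Fin (N + 1) → ℝ), vext,
        (Pi.single (Fin.last N) 1 : Fin (N + 1) → ℝ)} : Set (Fin (N + 1) → ℝ)))
    (jst : Fin (N - 1)) (hjst : i0 < jst)
    (hjne : ∑ i : Fin (N - 1), U jst i * p (embIn N i) ≠ 0)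
    (hjmin : ∀ j : Fin (N - 1), i0 < j → j < jst →
      ∑ i : Fin (N - 1), U j i * p (embIn N i) = 0)
    (E : (Fin (N + 1) → ℝ) → ℝ)
    (hE : ∀ q : Fin (N + 1) → ℝ, E q = ∑ i : Fin (N - 1),
      φ (q (embIn N i) / (V i0 i * ∑ j : Fin (N - 1), U i0 j * q (embIn N j)))
        * V i0 i * U i0 i) :
    Filter.Tendsto
      (fun n : ℕ => (μ i0 / μ jst) ^ (2 * n) * E ((moranM N s ^ n).mulVec p))
      Filter.atTop
      (nhds (m / 2
        * ((∑ i : Fin (N - 1), U jst i * p (embIn N i)) ^ 2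
            / (∑ i : Fin (N - 1), U i0 i * p (embIn N i)) ^ 2)
        * ∑ i : Fin (N - 1), (V jst i) ^ 2 * U i0 i / V i0 i)) := by
  classical
  obtain ⟨hs0, hsN, -⟩ := hs
  have hμne : ∀ j, μ j ≠ 0 := fun j => (hμpos j).ne'
  set c : Fin (N - 1) → ℝ := fun j => ∑ i, U j i * p (embIn N i) with hcdef
  have hc0 : 0 < c i0 := hip
  have hc0' : c i0 ≠ 0 := hc0.ne'
  have hVne : ∀ i, V i0 i ≠ 0 := fun i => (hVpos i).ne'
  -- biorthogonality
  have hbi : ∀ i j, i ≠ j → ∑ k, U i k * V j k = 0 := by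
    intro i j hij
    have h1 : U i ⬝ᵥ (moranCore N s).mulVec (V j) = (moranCore N s).vecMul (U i) ⬝ᵥ V j :=
      Matrix.dotProduct_mulVec _ _ _
    rw [hMV j, hUM i, dotProduct_smul, smul_dotProduct] at h1
    have h2 : (μ j - μ i) • (U i ⬝ᵥ V j) = 0 := by
      rw [sub_smul, h1, sub_self]
    have h3 : μ j - μ i ≠ 0 :=
      sub_ne_zero.mpr fun h => hij (hμanti.injective h.symm)
    have h4 := (smul_eq_zero.mp h2).resolve_left h3
    simpa [dotProduct] using h4
  -- linear independence of the eigenvectors, completeness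
  have hVne0 : ∀ i, V i ≠ 0 := by
    intro i h
    have h1 := hUV i
    rw [h] at h1
    simp at h1
  haveI : Nonempty (Fin (N - 1)) := ⟨i0⟩
  have hli : LinearIndependent ℝ V := by
    apply Module.End.eigenvectors_linearIndependent' ((moranCore N s).mulVecLin) μ
      hμanti.injective
    intro i
    refine ⟨Module.End.mem_eigenspace_iff.mpr ?_, hVne0 i⟩
    simpa [Matrix.mulVecLin_apply] using hMV i
  have hcard : Fintype.card (Fin (N - 1)) = Module.finrank ℝ (Fin (N - 1) → ℝ) := by
    rw [Module.finrank_fintype_fun_eq_card]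
  set b := basisOfLinearIndependentOfCardEqFinrank hli hcard with hbdef
  have hb : ⇑b = V := coe_basisOfLinearIndependentOfCardEqFinrank hli hcard
  set r : Fin (N - 1) → ℝ := fun j => b.repr (fun i => p (embIn N i)) j with hrdef
  have hsum : ∑ j, r j • V j = fun i => p (embIn N i) := by
    have h := b.sum_repr (fun i => p (embIn N i))
    simp only [hb] at h
    exact h
  have hpt : ∀ k, p (embIn N k) = ∑ j, r j * V j k := by
    intro k
    have h := congrFun hsum k
    simp only [Finset.sum_apply, Pi.smul_apply, smul_eq_mul] at h
    exact h.symm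
  have hrc : ∀ j, r j = c j := by
    intro j
    have h1 : c j = ∑ i, r i * ∑ k, U j k * V i k := by
      calc c j = ∑ k, U j k * p (embIn N k) := rfl
        _ = ∑ k, ∑ i, U j k * (r i * V i k) := by
            refine Finset.sum_congr rfl fun k _ => ?_
            rw [hpt k, Finset.mul_sum]
        _ = ∑ i, ∑ k, U j k * (r i * V i k) := Finset.sum_comm
        _ = ∑ i, r i * ∑ k, U j k * V i k := by
            refine Finset.sum_congr rfl fun i _ => ?_
            rw [Finset.mul_sum]
            exact Finset.sum_congr rfl fun k _ => by ring
    rw [h1, Finset.sum_eq_single j]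
    · rw [hUV j, mul_one]
    · intro i _ hij
      rw [hbi j i (Ne.symm hij), mul_zero]
    · intro h; exact absurd (Finset.mem_univ j) h
  -- spectral decomposition of the core evolution
  set q : ℕ → Fin (N - 1) → ℝ :=
    fun n => (moranCore N s ^ n).mulVec (fun i => p (embIn N i)) with hqdef
  have hq : ∀ n i, q n i = ∑ j, c j * μ j ^ n * V j i := by
    intro n
    induction n with
    | zero =>
      intro i
      have h0 : q 0 i = p (embIn N i) := by
        simp [hqdef, Matrix.one_mulVec]
      rw [h0, hpt i]
      exact Finset.sum_congr rfl fun j _ => by rw [hrc j, pow_zero, mul_one]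
    | succ n ih =>
      intro i
      have h1 : q (n + 1) = (moranCore N s).mulVec (q n) := by
        simp only [hqdef]
        rw [pow_succ', ← Matrix.mulVec_mulVec]
      rw [h1]
      have h2 : (moranCore N s).mulVec (q n) i = ∑ k, moranCore N s i k * q n k := rfl
      rw [h2]
      calc ∑ k, moranCore N s i k * q n k
          = ∑ k, ∑ j, moranCore N s i k * (c j * μ j ^ n * V j k) := by
            refine Finset.sum_congr rfl fun k _ => ?_
            rw [ih k, Finset.mul_sum]
        _ = ∑ j, ∑ k, moranCore N s i k * (c j * μ j ^ n * V j k) := Finset.sum_comm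
        _ = ∑ j, c j * μ j ^ n * ∑ k, moranCore N s i k * V j k := by
            refine Finset.sum_congr rfl fun j _ => ?_
            rw [Finset.mul_sum]
            exact Finset.sum_congr rfl fun k _ => by ring
        _ = ∑ j, c j * μ j ^ (n + 1) * V j i := by
            refine Finset.sum_congr rfl fun j _ => ?_
            have h3 : ∑ k, moranCore N s i k * V j k = μ j * V j i := by
              have := congrFun (hMV j) i
              simpa [Matrix.mulVec, dotProduct] using this
            rw [h3]; ring
  have hfull : ∀ n i, ((moranM N s ^ n).mulVec p) (embIn N i) = q n i :=
    fun n i => core_pow N hN s hs0 hsN p n i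
  have hinner : ∀ n, ∑ k, U i0 k * q n k = c i0 * μ i0 ^ n := by
    intro n
    calc ∑ k, U i0 k * q n k
        = ∑ k, ∑ j, U i0 k * (c j * μ j ^ n * V j k) := by
          refine Finset.sum_congr rfl fun k _ => ?_
          rw [hq n k, Finset.mul_sum]
      _ = ∑ j, ∑ k, U i0 k * (c j * μ j ^ n * V j k) := Finset.sum_comm
      _ = ∑ j, c j * μ j ^ n * ∑ k, U i0 k * V j k := by
          refine Finset.sum_congr rfl fun j _ => ?_
          rw [Finset.mul_sum]
          exact Finset.sum_congr rfl fun k _ => by ring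
      _ = c i0 * μ i0 ^ n := by
          rw [Finset.sum_eq_single i0]
          · rw [hUV i0, mul_one]
          · intro j _ hj
            rw [hbi i0 j (Ne.symm hj), mul_zero]
          · intro h; exact absurd (Finset.mem_univ i0) h
  -- the fluctuation variables
  set eps : ℕ → Fin (N - 1) → ℝ := fun n i =>
    ∑ j ∈ Finset.univ.erase i0,
      c j * μ j ^ n * V j i / (V i0 i * (c i0 * μ i0 ^ n)) with hepsdef
  have hDne : ∀ n i, V i0 i * (c i0 * μ i0 ^ n) ≠ 0 := by
    intro n i
    exact (mul_pos (hVpos i) (mul_pos hc0 (pow_pos (hμpos i0) n))).ne'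
  have heps_eq : ∀ n i, q n i / (V i0 i * (c i0 * μ i0 ^ n)) = 1 + eps n i := by
    intro n i
    rw [hq n i, ← Finset.add_sum_erase _ _ (Finset.mem_univ i0), add_div,
      Finset.sum_div]
    congr 1
    have h1 : c i0 * μ i0 ^ n * V i0 i = V i0 i * (c i0 * μ i0 ^ n) := by ring
    rw [h1, div_self (hDne n i)]
  have hE_eq : ∀ n, E ((moranM N s ^ n).mulVec p)
      = ∑ i, φ (1 + eps n i) * V i0 i * U i0 i := by
    intro n
    rw [hE]
    refine Finset.sum_congr rfl fun i _ => ?_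
    have h1 : ∑ j, U i0 j * ((moranM N s ^ n).mulVec p) (embIn N j)
        = c i0 * μ i0 ^ n := by
      rw [← hinner n]
      exact Finset.sum_congr rfl fun j _ => by rw [hfull n j]
    rw [h1, hfull n i, heps_eq n i]
  -- the linear term vanishes
  have hlin : ∀ n, ∑ i, eps n i * (V i0 i * U i0 i) = 0 := by
    intro n
    have hD' : c i0 * μ i0 ^ n ≠ 0 := (mul_pos hc0 (pow_pos (hμpos i0) n)).ne'
    calc ∑ i, eps n i * (V i0 i * U i0 i)
        = ∑ i, ∑ j ∈ Finset.univ.erase i0,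
            c j * μ j ^ n / (c i0 * μ i0 ^ n) * (V j i * U i0 i) := by
          refine Finset.sum_congr rfl fun i _ => ?_
          rw [hepsdef, Finset.sum_mul]
          refine Finset.sum_congr rfl fun j _ => ?_
          rw [div_mul_eq_mul_div, div_mul_eq_mul_div, div_eq_div_iff (hDne n i) hD']
          ring
      _ = ∑ j ∈ Finset.univ.erase i0,
            c j * μ j ^ n / (c i0 * μ i0 ^ n) * ∑ i, V j i * U i0 i := by
          rw [Finset.sum_comm]
          exact Finset.sum_congr rfl fun j _ => (Finset.mul_sum _ _ _).symm
      _ = 0 := by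
          refine Finset.sum_eq_zero fun j hj => ?_
          have hji0 : j ≠ i0 := Finset.ne_of_mem_erase hj
          have h2 : ∑ i, V j i * U i0 i = 0 := by
            rw [← hbi i0 j (Ne.symm hji0)]
            exact Finset.sum_congr rfl fun i _ => by ring
          rw [h2, mul_zero]
  -- the scaled fluctuations converge
  have hscaled : ∀ i, Tendsto (fun n => (μ i0 / μ jst) ^ n * eps n i) atTop
      (𝓝 (c jst * V jst i / (c i0 * V i0 i))) := by
    intro i
    have heq : ∀ n, (μ i0 / μ jst) ^ n * eps n i
        = ∑ j ∈ Finset.univ.erase i0,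
            c j * V j i / (c i0 * V i0 i) * (μ j / μ jst) ^ n := by
      intro n
      rw [hepsdef, Finset.mul_sum]
      refine Finset.sum_congr rfl fun j _ => ?_
      have h1 : (μ jst) ^ n ≠ 0 := pow_ne_zero _ (hμne jst)
      have h2 : (μ i0) ^ n ≠ 0 := pow_ne_zero _ (hμne i0)
      rw [div_pow, div_pow, div_mul_div_comm, div_mul_div_comm,
        div_eq_div_iff (mul_ne_zero h1 (hDne n i))
          (mul_ne_zero (mul_ne_zero hc0' (hVne i)) h1)]
      ring
    have hjmem : jst ∈ Finset.univ.erase i0 :=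
      Finset.mem_erase.mpr ⟨ne_of_gt hjst, Finset.mem_univ _⟩
    have hlim : Tendsto (fun n => ∑ j ∈ Finset.univ.erase i0,
        c j * V j i / (c i0 * V i0 i) * (μ j / μ jst) ^ n) atTop
        (𝓝 (∑ j ∈ Finset.univ.erase i0,
          if j = jst then c jst * V jst i / (c i0 * V i0 i) else 0)) := by
      refine tendsto_finset_sum _ fun j hj => ?_
      by_cases hje : j = jst
      · subst hje
        rw [if_pos rfl]
        have : ∀ n : ℕ, c j * V j i / (c i0 * V i0 i) * (μ j / μ j) ^ n
            = c j * V j i / (c i0 * V i0 i) := by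
          intro n
          rw [div_self (hμne j), one_pow, mul_one]
        exact Tendsto.congr (fun n => (this n).symm) tendsto_const_nhds
      · rw [if_neg hje]
        rcases lt_or_gt_of_ne (fun h : j = jst => hje h) with hlt | hgt
        · -- j < jst : the coefficient c j vanishes
          have hji0 : j ≠ i0 := Finset.ne_of_mem_erase hj
          have hj0 : (j : ℕ) ≠ 0 := by
            intro h
            exact hji0 (Fin.ext (by rw [h, hi0]))
          have hi0j : i0 < j := by
            rw [Fin.lt_def, hi0]
            omega
          have hcj : c j = 0 := hjmin j hi0j hlt
          have : ∀ n : ℕ, c j * V j i / (c i0 * V i0 i) * (μ j / μ jst) ^ n = 0 := by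
            intro n
            rw [hcj]
            ring
          exact Tendsto.congr (fun n => (this n).symm) tendsto_const_nhds
        · -- jst < j : geometric decay
          have h0 : Tendsto (fun n : ℕ => (μ j / μ jst) ^ n) atTop (𝓝 0) :=
            tendsto_pow_atTop_nhds_zero_of_lt_one
              (div_nonneg (hμpos j).le (hμpos jst).le)
              ((div_lt_one (hμpos jst)).mpr (hμanti hgt))
          have := h0.const_mul (c j * V j i / (c i0 * V i0 i))
          rwa [mul_zero] at this
    have hval : (∑ j ∈ Finset.univ.erase i0,
        if j = jst then c jst * V jst i / (c i0 * V i0 i) else 0)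
        = c jst * V jst i / (c i0 * V i0 i) := by
      rw [Finset.sum_eq_single_of_mem jst hjmem]
      · rw [if_pos rfl]
      · intro b _ hb
        rw [if_neg hb]
    rw [hval] at hlim
    exact hlim.congr fun n => (heq n).symm
  -- the fluctuations tend to zero
  have heps0 : ∀ i, Tendsto (fun n => eps n i) atTop (𝓝 0) := by
    intro i
    have hratio : (0:ℝ) ≤ μ jst / μ i0 := div_nonneg (hμpos jst).le (hμpos i0).le
    have hratio1 : μ jst / μ i0 < 1 := (div_lt_one (hμpos i0)).mpr (hμanti hjst)
    have h0 : Tendsto (fun n : ℕ => (μ jst / μ i0) ^ n) atTop (𝓝 0) :=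
      tendsto_pow_atTop_nhds_zero_of_lt_one hratio hratio1
    have h1 := h0.mul (hscaled i)
    rw [zero_mul] at h1
    refine h1.congr fun n => ?_
    rw [← mul_assoc, ← mul_pow]
    have : μ jst / μ i0 * (μ i0 / μ jst) = 1 := by
      rw [div_mul_div_comm, mul_comm (μ jst) (μ i0)]
      exact div_self (mul_ne_zero (hμne i0) (hμne jst))
    rw [this, one_pow, one_mul]
  -- main pointwise identity
  have hfun : ∀ n, (μ i0 / μ jst) ^ (2 * n) * E ((moranM N s ^ n).mulVec p)
      = ∑ i, gAux φ m (eps n i) * ((μ i0 / μ jst) ^ n * eps n i) ^ 2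
          * (V i0 i * U i0 i) := by
    intro n
    rw [hE_eq n, Finset.mul_sum]
    have hsplit : ∀ i : Fin (N - 1), (μ i0 / μ jst) ^ (2 * n)
        * (φ (1 + eps n i) * V i0 i * U i0 i)
        = gAux φ m (eps n i) * ((μ i0 / μ jst) ^ n * eps n i) ^ 2 * (V i0 i * U i0 i)
          + deriv φ 1 * ((μ i0 / μ jst) ^ (2 * n) * (eps n i * (V i0 i * U i0 i))) := by
      intro i
      have hid := gAux_id φ m (eps n i)
      rw [hφ1, add_zero] at hid
      rw [hid]
      have hpow : ((μ i0 / μ jst) ^ n) ^ 2 = (μ i0 / μ jst) ^ (2 * n) := by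
        rw [← pow_mul, mul_comm]
      rw [← hpow]
      ring
    rw [Finset.sum_congr rfl fun i _ => hsplit i, Finset.sum_add_distrib]
    have h2 : ∑ i, deriv φ 1 * ((μ i0 / μ jst) ^ (2 * n) * (eps n i * (V i0 i * U i0 i)))
        = 0 := by
      have h3 : ∀ i : Fin (N - 1),
          deriv φ 1 * ((μ i0 / μ jst) ^ (2 * n) * (eps n i * (V i0 i * U i0 i)))
          = deriv φ 1 * (μ i0 / μ jst) ^ (2 * n) * (eps n i * (V i0 i * U i0 i)) := by
        intro i; ring
      rw [Finset.sum_congr rfl fun i _ => h3 i, ← Finset.mul_sum, hlin n, mul_zero]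
    rw [h2, add_zero]
  -- convergence of the sum
  have hcont : ContinuousAt (gAux φ m) 0 := gAux_continuousAt φ hφC2 m hm
  have hfinal : Tendsto (fun n => ∑ i, gAux φ m (eps n i)
      * ((μ i0 / μ jst) ^ n * eps n i) ^ 2 * (V i0 i * U i0 i)) atTop
      (𝓝 (∑ i, m / 2 * (c jst * V jst i / (c i0 * V i0 i)) ^ 2 * (V i0 i * U i0 i))) := by
    refine tendsto_finset_sum _ fun i _ => ?_
    have h1 : Tendsto (fun n => gAux φ m (eps n i)) atTop (𝓝 (m / 2)) := by
      have h2 := hcont.tendsto.comp (heps0 i)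
      have h3 : gAux φ m 0 = m / 2 := if_pos rfl
      rw [h3] at h2
      exact h2
    have h4 : Tendsto (fun n => ((μ i0 / μ jst) ^ n * eps n i) ^ 2) atTop
        (𝓝 ((c jst * V jst i / (c i0 * V i0 i)) ^ 2)) := by
      have h5 := ((continuous_pow 2).continuousAt).tendsto.comp (hscaled i)
      exact h5
    exact (h1.mul h4).mul_const _
  have hT := hfinal.congr fun n => (hfun n).symm
  have hval : (∑ i, m / 2 * (c jst * V jst i / (c i0 * V i0 i)) ^ 2 * (V i0 i * U i0 i))
      = m / 2 * (c jst ^ 2 / c i0 ^ 2) * ∑ i, V jst i ^ 2 * U i0 i / V i0 i := by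
    rw [Finset.mul_sum]
    refine Finset.sum_congr rfl fun i _ => ?_
    field_simp [hVne i, hc0']
  rw [hval] at hT
  exact hT
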